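/- arXiv:1907.03796 — 4 statements merged into one kernel-verified Lean document; each statement's English description precedes it below -/
import Mathlib

section
/- Let q > 0, a > 0, T > 0, and let g : [0, T) → ℝ be a differentiable function with 0 ≤ g(t) < 1, g(t) → 1 as t → T⁻, and g'(t) ≤ ((qa+1)/a)(1 - g(t))^{-2q-1} for all t ∈ [0, T). Then for all t ∈ [0, T), g(t) ≥ 1 - C₂(T - t)^{1/(2q+2)} where C₂ = ((qa+1)(2q+2)/a)^{1/(2q+2)}. -/
/-- Integration step in the quenching rate lower bound (Theorem 3.2). -/
theorem stmt_1 (q a T : ℝ) (hq : 0 < q) (ha : 0 < a) (hT : 0 < T)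
    (g g' : ℝ → ℝ)
    (hderiv : ∀ t ∈ Set.Ico (0:ℝ) T, HasDerivWithinAt g (g' t) (Set.Ico (0:ℝ) T) t)
    (hrange : ∀ t ∈ Set.Ico (0:ℝ) T, 0 ≤ g t ∧ g t < 1)
    (hlim : Filter.Tendsto g (nhdsWithin T (Set.Iio T)) (nhds 1))
    (hineq : ∀ t ∈ Set.Ico (0:ℝ) T, g' t ≤ ((q * a + 1) / a) * (1 - g t) ^ (-(2 * q) - 1)) :
    ∀ t ∈ Set.Ico (0:ℝ) T,
      g t ≥ 1 - ((q * a + 1) * (2 * q + 2) / a) ^ (1 / (2 * q + 2)) * (T - t) ^ (1 / (2 * q + 2)) := by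
  set C : ℝ := (q * a + 1) * (2 * q + 2) / a with hC
  have hp : (0:ℝ) < 2 * q + 2 := by linarith
  have hqa : (0:ℝ) < q * a + 1 := by nlinarith
  have hCpos : 0 < C := by positivity
  set φ : ℝ → ℝ := fun t => (1 - g t) ^ (2 * q + 2) + C * t with hφ
  set φ' : ℝ → ℝ := fun t => (2 * q + 2) * (1 - g t) ^ (2 * q + 1) * (-g' t) + C with hφ'
  have hIco : Convex ℝ (Set.Ico (0:ℝ) T) := convex_Ico 0 T
  have hint : interior (Set.Ico (0:ℝ) T) = Set.Ioo 0 T := interior_Ico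
  -- derivative of φ within Ico
  have hφderiv : ∀ t ∈ Set.Ico (0:ℝ) T, HasDerivWithinAt φ (φ' t) (Set.Ico (0:ℝ) T) t := by
    intro t ht
    have hb : 0 < 1 - g t := by have := (hrange t ht).2; linarith
    have h1 : HasDerivWithinAt (fun t => 1 - g t) (-g' t) (Set.Ico (0:ℝ) T) t := by
      simpa using (hderiv t ht).const_sub (1:ℝ)
    have h2 := h1.rpow_const (p := 2 * q + 2) (Or.inl hb.ne')
    have h3 : HasDerivWithinAt (fun t => C * t) C (Set.Ico (0:ℝ) T) t := by
      simpa using (hasDerivWithinAt_id t _).const_mul C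
    have := h2.add h3
    convert this using 1
    · rfl
    · rfl
    · rfl
    simp only [hφ']
    ring_nf
  have hφ'nonneg : ∀ t ∈ Set.Ico (0:ℝ) T, 0 ≤ φ' t := by
    intro t ht
    have hb : 0 < 1 - g t := by have := (hrange t ht).2; linarith
    have hpow : (0:ℝ) < (1 - g t) ^ (2 * q + 1) := Real.rpow_pos_of_pos hb _
    have h1 := hineq t ht
    have h2 : (1 - g t) ^ (2 * q + 1) * g' t
        ≤ (1 - g t) ^ (2 * q + 1) * (((q * a + 1) / a) * (1 - g t) ^ (-(2 * q) - 1)) :=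
      mul_le_mul_of_nonneg_left h1 hpow.le
    have h3 : (1 - g t) ^ (2 * q + 1) * (1 - g t) ^ (-(2 * q) - 1) = 1 := by
      rw [← Real.rpow_add hb]
      norm_num
    have h4 : (1 - g t) ^ (2 * q + 1) * g' t ≤ (q * a + 1) / a := by
      calc (1 - g t) ^ (2 * q + 1) * g' t
          ≤ (1 - g t) ^ (2 * q + 1) * (((q * a + 1) / a) * (1 - g t) ^ (-(2 * q) - 1)) := h2
        _ = ((q * a + 1) / a) * ((1 - g t) ^ (2 * q + 1) * (1 - g t) ^ (-(2 * q) - 1)) := by ring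
        _ = (q * a + 1) / a := by rw [h3]; ring
    have h5 : (2 * q + 2) * ((1 - g t) ^ (2 * q + 1) * g' t) ≤ C := by
      rw [hC]
      calc (2 * q + 2) * ((1 - g t) ^ (2 * q + 1) * g' t)
          ≤ (2 * q + 2) * ((q * a + 1) / a) := by
            exact mul_le_mul_of_nonneg_left h4 hp.le
        _ = (q * a + 1) * (2 * q + 2) / a := by ring
    simp only [hφ']
    nlinarith [h5]
  have hcont : ContinuousOn φ (Set.Ico (0:ℝ) T) := fun t ht =>
    (hφderiv t ht).continuousWithinAt
  have hmono : MonotoneOn φ (Set.Ico (0:ℝ) T) := by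
    apply monotoneOn_of_hasDerivWithinAt_nonneg hIco hcont
    · intro x hx
      rw [hint] at hx ⊢
      exact (hφderiv x (Set.Ioo_subset_Ico_self hx)).mono Set.Ioo_subset_Ico_self
    · intro x hx
      rw [hint] at hx
      exact hφ'nonneg x (Set.Ioo_subset_Ico_self hx)
  -- limit of φ at T⁻ is C * T
  have hφlim : Filter.Tendsto φ (nhdsWithin T (Set.Iio T)) (nhds (C * T)) := by
    have h1 : Filter.Tendsto (fun t => 1 - g t) (nhdsWithin T (Set.Iio T)) (nhds 0) := by
      have := (tendsto_const_nhds (x := (1:ℝ))).sub hlim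
      simpa using this
    have h2 : Filter.Tendsto (fun t => (1 - g t) ^ (2 * q + 2)) (nhdsWithin T (Set.Iio T))
        (nhds 0) := by
      have hcont0 : ContinuousAt (fun x : ℝ => x ^ (2 * q + 2)) 0 :=
        Real.continuousAt_rpow_const 0 _ (Or.inr hp.le)
      have := hcont0.tendsto.comp h1
      simpa [Function.comp_def, Real.zero_rpow hp.ne'] using this
    have h3 : Filter.Tendsto (fun t => C * t) (nhdsWithin T (Set.Iio T)) (nhds (C * T)) :=
      ((continuous_const.mul continuous_id).tendsto T).mono_left nhdsWithin_le_nhds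
    simpa using h2.add h3
  intro t ht
  have hb : 0 < 1 - g t := by have := (hrange t ht).2; linarith
  -- φ t ≤ C * T
  have hkey : φ t ≤ C * T := by
    apply ge_of_tendsto hφlim
    filter_upwards [Ioo_mem_nhdsLT_of_mem ⟨ht.2, le_refl T⟩] with s hs
    exact hmono ht ⟨by linarith [ht.1, hs.1], hs.2⟩ hs.1.le
  have h6 : (1 - g t) ^ (2 * q + 2) ≤ C * (T - t) := by
    have : φ t = (1 - g t) ^ (2 * q + 2) + C * t := rfl
    nlinarith [hkey]
  -- apply rpow with exponent 1/(2q+2)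
  have h7 : ((1 - g t) ^ (2 * q + 2)) ^ (1 / (2 * q + 2)) ≤ (C * (T - t)) ^ (1 / (2 * q + 2)) :=
    Real.rpow_le_rpow (Real.rpow_nonneg hb.le _) h6 (by positivity)
  have h8 : ((1 - g t) ^ (2 * q + 2)) ^ (1 / (2 * q + 2)) = 1 - g t := by
    rw [← Real.rpow_mul hb.le, mul_one_div, div_self hp.ne', Real.rpow_one]
  have hTt : (0:ℝ) ≤ T - t := by linarith [ht.2]
  have h9 : (C * (T - t)) ^ (1 / (2 * q + 2))
      = C ^ (1 / (2 * q + 2)) * (T - t) ^ (1 / (2 * q + 2)) :=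
    Real.mul_rpow hCpos.le hTt
  rw [h8, h9] at h7
  linarith [h7]
end

section
/- Let q > 0, a > 0, u₀ : [0, a] → ℝ with 0 ≤ u₀(a) < 1, and suppose a differentiable function g : [0, T) → ℝ with g(0) = u₀(a), 0 ≤ g < 1, g(t) → 1 as t → T⁻, satisfies g'(t) ≤ ((qa+1)/a)(1 - g(t))^{-2q-1}. Then T ≥ a(1 - u₀(a))^{2q+2} / (2(qa+1)(q+1)). -/
/-- Corollary 3.1: lower bound on the quenching time at the right wall. -/
theorem stmt_4 (q a T : ℝ) (hq : 0 < q) (ha : 0 < a) (hT : 0 < T)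
    (u₀ : ℝ → ℝ) (hu₀ : 0 ≤ u₀ a ∧ u₀ a < 1)
    (g g' : ℝ → ℝ) (hg0 : g 0 = u₀ a)
    (hderiv : ∀ t ∈ Set.Ico (0:ℝ) T, HasDerivWithinAt g (g' t) (Set.Ico (0:ℝ) T) t)
    (hrange : ∀ t ∈ Set.Ico (0:ℝ) T, 0 ≤ g t ∧ g t < 1)
    (hlim : Filter.Tendsto g (nhdsWithin T (Set.Iio T)) (nhds 1))
    (hineq : ∀ t ∈ Set.Ico (0:ℝ) T, g' t ≤ ((q * a + 1) / a) * (1 - g t) ^ (-(2 * q) - 1)) :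
    a * (1 - u₀ a) ^ (2 * q + 2) / (2 * (q * a + 1) * (q + 1)) ≤ T := by
  set C : ℝ := 2 * (q + 1) * (q * a + 1) / a with hC
  have hqa : 0 < q * a + 1 := by nlinarith
  have hCpos : 0 < C := by positivity
  set F : ℝ → ℝ := fun t => (1 - g t) ^ (2 * q + 2) + C * t with hF
  -- derivative of F within Ico
  have hFd : ∀ t ∈ Set.Ico (0:ℝ) T,
      HasDerivWithinAt F (-(g' t) * (2 * q + 2) * (1 - g t) ^ (2 * q + 2 - 1) + C)
        (Set.Ico (0:ℝ) T) t := by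
    intro t ht
    have h1 : HasDerivWithinAt (fun t => 1 - g t) (-(g' t)) (Set.Ico (0:ℝ) T) t := by
      exact (hderiv t ht).const_sub 1
    have hne : 1 - g t ≠ 0 := by
      have := (hrange t ht).2; linarith
    have h2 : HasDerivWithinAt (fun t : ℝ => C * t) C (Set.Ico (0:ℝ) T) t := by
      simpa using (hasDerivWithinAt_id t (Set.Ico (0:ℝ) T)).const_mul C
    exact (h1.rpow_const (Or.inl hne)).add h2
  -- nonnegativity of the derivative
  have hFd0 : ∀ t ∈ Set.Ico (0:ℝ) T,
      0 ≤ -(g' t) * (2 * q + 2) * (1 - g t) ^ (2 * q + 2 - 1) + C := by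
    intro t ht
    have hgt1 : 0 < 1 - g t := by have := (hrange t ht).2; linarith
    have h1 := hineq t ht
    have hpow : (0:ℝ) < (1 - g t) ^ (2 * q + 2 - 1) := Real.rpow_pos_of_pos hgt1 _
    have hmul : g' t * (1 - g t) ^ (2 * q + 2 - 1)
        ≤ ((q * a + 1) / a) * ((1 - g t) ^ (-(2 * q) - 1) * (1 - g t) ^ (2 * q + 2 - 1)) := by
      have := mul_le_mul_of_nonneg_right h1 hpow.le
      linarith [this]
    have hrw : (1 - g t) ^ (-(2 * q) - 1) * (1 - g t) ^ (2 * q + 2 - 1) = 1 := by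
      rw [← Real.rpow_add hgt1]
      have he : -(2 * q) - 1 + (2 * q + 2 - 1) = 0 := by ring
      rw [he, Real.rpow_zero]
    rw [hrw, mul_one] at hmul
    have : g' t * (2 * q + 2) * (1 - g t) ^ (2 * q + 2 - 1) ≤ C := by
      have h2 : (0:ℝ) ≤ 2 * q + 2 := by linarith
      calc g' t * (2 * q + 2) * (1 - g t) ^ (2 * q + 2 - 1)
          = (2 * q + 2) * (g' t * (1 - g t) ^ (2 * q + 2 - 1)) := by ring
        _ ≤ (2 * q + 2) * ((q * a + 1) / a) := by
            exact mul_le_mul_of_nonneg_left hmul h2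
        _ = C := by rw [hC]; ring
    linarith
  -- F is monotone on Ico 0 T
  have hmono : MonotoneOn F (Set.Ico (0:ℝ) T) := by
    apply monotoneOn_of_hasDerivWithinAt_nonneg (convex_Ico 0 T)
      (f' := fun t => -(g' t) * (2 * q + 2) * (1 - g t) ^ (2 * q + 2 - 1) + C)
      (fun t ht => (hFd t ht).continuousWithinAt)
    · intro t ht
      rw [interior_Ico] at ht
      exact ((hFd t (Set.mem_Ico_of_Ioo ht)).mono
        (by rw [interior_Ico]; exact Set.Ioo_subset_Ico_self))
    · intro t ht
      rw [interior_Ico] at ht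
      exact hFd0 t (Set.mem_Ico_of_Ioo ht)
  have h0mem : (0:ℝ) ∈ Set.Ico (0:ℝ) T := ⟨le_refl 0, hT⟩
  -- key pointwise inequality
  have hkey : ∀ t ∈ Set.Ico (0:ℝ) T,
      (1 - u₀ a) ^ (2 * q + 2) - C * t ≤ (1 - g t) ^ (2 * q + 2) := by
    intro t ht
    have := hmono h0mem ht ht.1
    simp only [hF, hg0, mul_zero, add_zero] at this
    linarith
  -- take the limit t → T⁻
  have hne : (nhdsWithin T (Set.Iio T)).NeBot := by
    exact nhdsLT_neBot T
  have hlim1 : Filter.Tendsto (fun t => (1 - g t) ^ (2 * q + 2))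
      (nhdsWithin T (Set.Iio T)) (nhds 0) := by
    have h1 : Filter.Tendsto (fun t => 1 - g t) (nhdsWithin T (Set.Iio T)) (nhds 0) := by
      have := hlim.const_sub 1
      simpa using this
    have hc : ContinuousAt (fun x : ℝ => x ^ (2 * q + 2)) 0 :=
      Real.continuousAt_rpow_const 0 _ (Or.inr (by linarith))
    have := hc.tendsto.comp h1
    simpa [Function.comp_def, Real.zero_rpow (show (2:ℝ) * q + 2 ≠ 0 by linarith)] using this
  have hlim2 : Filter.Tendsto (fun t => (1 - u₀ a) ^ (2 * q + 2) - C * t)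
      (nhdsWithin T (Set.Iio T)) (nhds ((1 - u₀ a) ^ (2 * q + 2) - C * T)) := by
    apply Filter.Tendsto.const_sub
    exact (tendsto_nhdsWithin_of_tendsto_nhds (Filter.tendsto_id)).const_mul C
  have hfin : (1 - u₀ a) ^ (2 * q + 2) - C * T ≤ 0 := by
    apply le_of_tendsto_of_tendsto hlim2 hlim1
    have h0t : ∀ᶠ t in nhdsWithin T (Set.Iio T), 0 < t :=
      (eventually_gt_nhds hT).filter_mono nhdsWithin_le_nhds
    filter_upwards [self_mem_nhdsWithin, h0t] with t ht h0
    exact hkey t ⟨h0.le, ht⟩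
  -- conclude
  have hX : (1 - u₀ a) ^ (2 * q + 2) ≤ C * T := by linarith
  rw [div_le_iff₀ (by positivity)]
  have : a * ((1 - u₀ a) ^ (2 * q + 2)) ≤ a * (C * T) :=
    mul_le_mul_of_nonneg_left hX ha.le
  have haC : a * C = 2 * (q + 1) * (q * a + 1) := by rw [hC]; field_simp
  nlinarith [this]
end

section
/- Let p > 0, a > 0, u₀ : [0, a] → ℝ with u₀(0) > 0, and suppose a differentiable positive function g : [0, T) → ℝ with g(0) = u₀(0), g(t) → 0 as t → T⁻, satisfies g'(t) ≥ -((pa+1)/a) · g(t)^{-2p-1}. Then T ≥ a · u₀(0)^{2p+2} / (2(pa+1)(p+1)). -/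
/-- Corollary 3.2: lower bound on the quenching time at the left wall. -/
theorem stmt_5 (p a T : ℝ) (hp : 0 < p) (ha : 0 < a) (hT : 0 < T)
    (u₀ : ℝ → ℝ) (hu₀ : 0 < u₀ 0)
    (g g' : ℝ → ℝ) (hg0 : g 0 = u₀ 0)
    (hderiv : ∀ t ∈ Set.Ico (0:ℝ) T, HasDerivWithinAt g (g' t) (Set.Ico (0:ℝ) T) t)
    (hpos : ∀ t ∈ Set.Ico (0:ℝ) T, 0 < g t)
    (hlim : Filter.Tendsto g (nhdsWithin T (Set.Iio T)) (nhds 0))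
    (hineq : ∀ t ∈ Set.Ico (0:ℝ) T, -((p * a + 1) / a) * (g t) ^ (-(2 * p) - 1) ≤ g' t) :
    a * (u₀ 0) ^ (2 * p + 2) / (2 * (p * a + 1) * (p + 1)) ≤ T := by
  set K : ℝ := (p * a + 1) / a with hK
  have hKpos : 0 < K := div_pos (by nlinarith) ha
  set C : ℝ := (2 * p + 2) * K with hCdef
  have hCpos : 0 < C := by positivity
  set φ : ℝ → ℝ := fun t => g t ^ (2 * p + 2) + C * t with hφ
  -- derivative of φ within Ico
  have hφderiv : ∀ t ∈ Set.Ico (0:ℝ) T,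
      HasDerivWithinAt φ (g' t * (2 * p + 2) * g t ^ (2 * p + 2 - 1) + C)
        (Set.Ico (0:ℝ) T) t := by
    intro t ht
    have h2 : HasDerivWithinAt (fun s : ℝ => C * s) C (Set.Ico (0:ℝ) T) t := by
      simpa using (hasDerivWithinAt_id t (Set.Ico (0:ℝ) T)).const_mul C
    exact ((hderiv t ht).rpow_const (Or.inl (ne_of_gt (hpos t ht)))).add h2
  -- derivative nonneg
  have hnonneg : ∀ t ∈ Set.Ico (0:ℝ) T,
      0 ≤ g' t * (2 * p + 2) * g t ^ (2 * p + 2 - 1) + C := by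
    intro t ht
    have hg := hpos t ht
    have h1 : g t ^ (2 * p + 2 - 1) * g t ^ (-(2 * p) - 1) = 1 := by
      rw [← Real.rpow_add hg]
      have he : 2 * p + 2 - 1 + (-(2 * p) - 1) = 0 := by ring
      rw [he, Real.rpow_zero]
    have hpow : 0 < g t ^ (2 * p + 2 - 1) := Real.rpow_pos_of_pos hg _
    have h2 := hineq t ht
    have h3 : -K * g t ^ (-(2 * p) - 1) * ((2 * p + 2) * g t ^ (2 * p + 2 - 1))
        ≤ g' t * ((2 * p + 2) * g t ^ (2 * p + 2 - 1)) :=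
      mul_le_mul_of_nonneg_right h2 (by positivity)
    have h4 : -K * g t ^ (-(2 * p) - 1) * ((2 * p + 2) * g t ^ (2 * p + 2 - 1)) = -C := by
      rw [hCdef]
      nlinarith [h1]
    nlinarith [h3, h4]
  -- φ is monotone on Ico
  have hmono : MonotoneOn φ (Set.Ico (0:ℝ) T) := by
    apply monotoneOn_of_hasDerivWithinAt_nonneg (convex_Ico 0 T)
      (f' := fun t => g' t * (2 * p + 2) * g t ^ (2 * p + 2 - 1) + C)
    · intro t ht
      exact (hφderiv t ht).continuousWithinAt
    · intro t ht
      rw [interior_Ico] at ht ⊢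
      exact (hφderiv t (Set.mem_Ico_of_Ioo ht)).mono Set.Ioo_subset_Ico_self
    · intro t ht
      rw [interior_Ico] at ht
      exact hnonneg t (Set.mem_Ico_of_Ioo ht)
  -- limit of φ as t → T⁻
  have hTlim : Filter.Tendsto φ (nhdsWithin T (Set.Iio T)) (nhds (0 + C * T)) := by
    apply Filter.Tendsto.add
    · have hc : ContinuousAt (fun x : ℝ => x ^ (2 * p + 2)) 0 :=
        Real.continuousAt_rpow_const 0 (2 * p + 2) (Or.inr (by positivity))
      have := hc.tendsto.comp hlim
      simpa [Function.comp_def, Real.zero_rpow (by positivity : (2 : ℝ) * p + 2 ≠ 0)] using this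
    · exact (tendsto_nhdsWithin_of_tendsto_nhds
        ((continuous_const.mul continuous_id).tendsto T)).mono_right le_rfl
  -- φ 0 ≤ C * T
  have h0T : φ 0 ≤ C * T := by
    haveI hne : (nhdsWithin T (Set.Iio T)).NeBot := nhdsLT_neBot T
    have hTlim' : Filter.Tendsto φ (nhdsWithin T (Set.Iio T)) (nhds (C * T)) := by
      simpa using hTlim
    apply ge_of_tendsto hTlim'
    filter_upwards [Ioo_mem_nhdsLT_of_mem (Set.mem_Ioc.mpr ⟨hT, le_rfl⟩)] with t ht
    exact hmono (Set.mem_Ico.mpr ⟨le_rfl, hT⟩)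
      (Set.mem_Ico.mpr ⟨le_of_lt ht.1, ht.2⟩) (le_of_lt ht.1)
  have hφ0 : φ 0 = (u₀ 0) ^ (2 * p + 2) := by
    simp [hφ, hg0]
  rw [hφ0] at h0T
  -- conclude
  rw [div_le_iff₀ (by nlinarith [mul_pos hp ha] : 0 < 2 * (p * a + 1) * (p + 1))]
  have hCT : (u₀ 0) ^ (2 * p + 2) ≤ (2 * p + 2) * ((p * a + 1) / a) * T := h0T
  have h5 : a * (u₀ 0 ^ (2 * p + 2)) ≤ (2 * p + 2) * (p * a + 1) * T :=
    calc a * (u₀ 0 ^ (2 * p + 2)) ≤ a * ((2 * p + 2) * ((p * a + 1) / a) * T) :=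
          mul_le_mul_of_nonneg_left hCT ha.le
      _ = (2 * p + 2) * (p * a + 1) * T := by field_simp
  calc a * u₀ 0 ^ (2 * p + 2) ≤ (2 * p + 2) * (p * a + 1) * T := h5
    _ = T * (2 * (p * a + 1) * (p + 1)) := by ring
end

section
/- Let φ : [0,1] → ℝ be continuous and strictly increasing with φ(0) = 0, and let u : [0,a] × [0,T₀) → ℝ be a C¹ solution (in an appropriate sense) of (φ(u))_t = (|u_x|^{r-2} u_x)_x with u_x(0,t) = u(0,t)^{-p}, u_x(a,t) = (1-u(a,t))^{-q}, u ≥ 0, u ≤ 1, and u_t ≤ 0 on (0,a)×(0,T₀). Suppose ω₃ := u(0,0)^{-p(r-1)} - (1-u(a,0))^{-q(r-1)} > 0. Then the mass m₃(t) = ∫₀ᵃ φ(u(x,t)) dx satisfies m₃(t) ≤ m₃(0) - ω₃ t for all t in [0, T₀), and consequently T₀ ≤ m₃(0)/ω₃. -/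
open Set Filter MeasureTheory
open scoped Topology ENNReal

/-- Theorem 2.1(a), mass-function argument: finite-time quenching. -/
theorem stmt_6 (a T₀ r p q : ℝ) (ha : 0 < a) (hT₀ : 0 < T₀) (hr : 2 ≤ r)
    (hp : 0 < p) (hq : 0 < q)
    (φ : ℝ → ℝ) (hφc : ContinuousOn φ (Set.Icc 0 1))
    (hφmono : StrictMonoOn φ (Set.Icc 0 1)) (hφ0 : φ 0 = 0)
    (u ux ut F Fx : ℝ → ℝ → ℝ)
    (hux : ∀ t ∈ Set.Ico (0:ℝ) T₀, ∀ x ∈ Set.Icc 0 a,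
      HasDerivWithinAt (fun y => u y t) (ux x t) (Set.Icc 0 a) x)
    (hut : ∀ x ∈ Set.Icc (0:ℝ) a, ∀ t ∈ Set.Ico (0:ℝ) T₀,
      HasDerivWithinAt (fun s => u x s) (ut x t) (Set.Ico (0:ℝ) T₀) t)
    (hF : ∀ x t, F x t = |ux x t| ^ (r - 2) * ux x t)
    (hFx : ∀ t ∈ Set.Ico (0:ℝ) T₀, ∀ x ∈ Set.Icc 0 a,
      HasDerivWithinAt (fun y => F y t) (Fx x t) (Set.Icc 0 a) x)
    (hpde : ∀ x ∈ Set.Icc (0:ℝ) a, ∀ t ∈ Set.Ico (0:ℝ) T₀,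
      HasDerivWithinAt (fun s => φ (u x s)) (Fx x t) (Set.Ico (0:ℝ) T₀) t)
    (hbc0 : ∀ t ∈ Set.Ico (0:ℝ) T₀, ux 0 t = (u 0 t) ^ (-p))
    (hbca : ∀ t ∈ Set.Ico (0:ℝ) T₀, ux a t = (1 - u a t) ^ (-q))
    (hrange : ∀ x ∈ Set.Icc (0:ℝ) a, ∀ t ∈ Set.Ico (0:ℝ) T₀, 0 ≤ u x t ∧ u x t ≤ 1)
    (hutneg : ∀ x ∈ Set.Ioo (0:ℝ) a, ∀ t ∈ Set.Ioo (0:ℝ) T₀, ut x t ≤ 0)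
    (hω : 0 < (u 0 0) ^ (-(p * (r - 1))) - (1 - u a 0) ^ (-(q * (r - 1)))) :
    (∀ t ∈ Set.Ico (0:ℝ) T₀,
      (∫ x in (0:ℝ)..a, φ (u x t)) ≤ (∫ x in (0:ℝ)..a, φ (u x 0)) -
        ((u 0 0) ^ (-(p * (r - 1))) - (1 - u a 0) ^ (-(q * (r - 1)))) * t) ∧
    T₀ ≤ (∫ x in (0:ℝ)..a, φ (u x 0)) /
        ((u 0 0) ^ (-(p * (r - 1))) - (1 - u a 0) ^ (-(q * (r - 1)))) := by
  classical
  have haIcc0 : (0:ℝ) ∈ Set.Icc (0:ℝ) a := ⟨le_rfl, ha.le⟩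
  have haIcca : a ∈ Set.Icc (0:ℝ) a := ⟨ha.le, le_rfl⟩
  have h0J : (0:ℝ) ∈ Set.Ico (0:ℝ) T₀ := ⟨le_rfl, hT₀⟩
  have hr1 : (0:ℝ) < r - 1 := by linarith
  have hα : (0:ℝ) < p * (r - 1) := mul_pos hp hr1
  have hβ : (0:ℝ) < q * (r - 1) := mul_pos hq hr1
  set ω := (u 0 0) ^ (-(p * (r - 1))) - (1 - u a 0) ^ (-(q * (r - 1))) with hωdef
  -- continuity facts
  have hucx : ∀ t ∈ Set.Ico (0:ℝ) T₀, ContinuousOn (fun y => u y t) (Set.Icc 0 a) :=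
    fun t ht x hx => (hux t ht x hx).continuousWithinAt
  have huct : ∀ x ∈ Set.Icc (0:ℝ) a, ContinuousOn (fun s => u x s) (Set.Ico 0 T₀) :=
    fun x hx t ht => (hut x hx t ht).continuousWithinAt
  have hφuct : ∀ x ∈ Set.Icc (0:ℝ) a, ContinuousOn (fun s => φ (u x s)) (Set.Ico 0 T₀) :=
    fun x hx t ht => (hpde x hx t ht).continuousWithinAt
  have hFcx : ∀ t ∈ Set.Ico (0:ℝ) T₀, ContinuousOn (fun y => F y t) (Set.Icc 0 a) :=
    fun t ht x hx => (hFx t ht x hx).continuousWithinAt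
  -- antitonicity in time, interior
  have hanti_int : ∀ x ∈ Set.Ioo (0:ℝ) a, AntitoneOn (fun s => u x s) (Set.Ico 0 T₀) := by
    intro x hx
    have hxI : x ∈ Set.Icc (0:ℝ) a := Set.Ioo_subset_Icc_self hx
    apply antitoneOn_of_deriv_nonpos (convex_Ico 0 T₀) (huct x hxI)
    · intro t ht
      rw [interior_Ico] at ht
      exact ((hut x hxI t (Set.Ioo_subset_Ico_self ht)).hasDerivAt
        (Ico_mem_nhds ht.1 ht.2)).differentiableAt.differentiableWithinAt
    · intro t ht
      rw [interior_Ico] at ht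
      rw [((hut x hxI t (Set.Ioo_subset_Ico_self ht)).hasDerivAt (Ico_mem_nhds ht.1 ht.2)).deriv]
      exact hutneg x hx t ht
  -- antitonicity in time, everywhere
  have hanti : ∀ x ∈ Set.Icc (0:ℝ) a, ∀ s ∈ Set.Ico (0:ℝ) T₀, ∀ s' ∈ Set.Ico (0:ℝ) T₀,
      s ≤ s' → u x s' ≤ u x s := by
    intro x hx s hs s' hs' hss'
    have hclo : x ∈ closure (Set.Ioo (0:ℝ) a) := by
      rw [closure_Ioo ha.ne]; exact hx
    have hne : (𝓝[Set.Ioo (0:ℝ) a] x).NeBot := mem_closure_iff_nhdsWithin_neBot.mp hclo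
    have t1 : Filter.Tendsto (fun y => u y s') (𝓝[Set.Ioo (0:ℝ) a] x) (𝓝 (u x s')) :=
      ((hux s' hs' x hx).continuousWithinAt).mono Set.Ioo_subset_Icc_self
    have t2 : Filter.Tendsto (fun y => u y s) (𝓝[Set.Ioo (0:ℝ) a] x) (𝓝 (u x s)) :=
      ((hux s hs x hx).continuousWithinAt).mono Set.Ioo_subset_Icc_self
    refine le_of_tendsto_of_tendsto t1 t2 ?_
    filter_upwards [self_mem_nhdsWithin] with y hy
    exact hanti_int y hy hs hs' hss'
  have hφanti : ∀ x ∈ Set.Icc (0:ℝ) a, ∀ s ∈ Set.Ico (0:ℝ) T₀, ∀ s' ∈ Set.Ico (0:ℝ) T₀,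
      s ≤ s' → φ (u x s') ≤ φ (u x s) := by
    intro x hx s hs s' hs' hss'
    have h1 := hrange x hx s hs
    have h2 := hrange x hx s' hs'
    exact hφmono.monotoneOn ⟨h2.1, h2.2⟩ ⟨h1.1, h1.2⟩ (hanti x hx s hs s' hs' hss')
  -- Fx ≤ 0
  have hFxle : ∀ x ∈ Set.Icc (0:ℝ) a, ∀ t ∈ Set.Ico (0:ℝ) T₀, Fx x t ≤ 0 := by
    intro x hx t ht
    have hslope := hasDerivWithinAt_iff_tendsto_slope.mp (hpde x hx t ht)
    have hsub : Set.Ioo t T₀ ⊆ Set.Ico (0:ℝ) T₀ \ {t} := by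
      intro y hy
      exact ⟨⟨le_trans ht.1 hy.1.le, hy.2⟩, by simp [(ne_of_gt hy.1)]⟩
    have hclo : t ∈ closure (Set.Ioo t T₀) := by
      rw [closure_Ioo (ne_of_lt ht.2)]; exact ⟨le_rfl, ht.2.le⟩
    haveI hne : (𝓝[Set.Ico (0:ℝ) T₀ \ {t}] t).NeBot :=
      (mem_closure_iff_nhdsWithin_neBot.mp hclo).mono (nhdsWithin_mono _ hsub)
    refine le_of_tendsto hslope ?_
    filter_upwards [self_mem_nhdsWithin] with y hy
    rcases hy with ⟨hyJ, hyne⟩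
    have hyne' : y ≠ t := by simpa using hyne
    rw [slope_def_field]
    rcases lt_or_gt_of_ne hyne' with h | h
    · apply div_nonpos_iff.mpr
      left
      constructor
      · have := hφanti x hx y hyJ t ht h.le; linarith
      · linarith
    · apply div_nonpos_iff.mpr
      right
      constructor
      · have := hφanti x hx t ht y hyJ h.le; linarith
      · linarith
  -- F antitone in x
  have hFanti : ∀ t ∈ Set.Ico (0:ℝ) T₀, AntitoneOn (fun y => F y t) (Set.Icc 0 a) := by
    intro t ht
    apply antitoneOn_of_deriv_nonpos (convex_Icc 0 a) (hFcx t ht)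
    · intro x hx
      rw [interior_Icc] at hx
      exact ((hFx t ht x (Set.Ioo_subset_Icc_self hx)).hasDerivAt
        (Icc_mem_nhds hx.1 hx.2)).differentiableAt.differentiableWithinAt
    · intro x hx
      rw [interior_Icc] at hx
      rw [((hFx t ht x (Set.Ioo_subset_Icc_self hx)).hasDerivAt (Icc_mem_nhds hx.1 hx.2)).deriv]
      exact hFxle x (Set.Ioo_subset_Icc_self hx) t ht
  -- boundary values of F
  have hF0 : ∀ t ∈ Set.Ico (0:ℝ) T₀, F 0 t = (u 0 t) ^ (-(p * (r - 1))) := by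
    intro t ht
    rw [hF, hbc0 t ht]
    rcases eq_or_lt_of_le (hrange 0 haIcc0 t ht).1 with h | h
    · rw [← h, Real.zero_rpow (neg_ne_zero.mpr hp.ne'), Real.zero_rpow (neg_ne_zero.mpr hα.ne')]
      simp
    · have h1 : (0:ℝ) < (u 0 t) ^ (-p) := Real.rpow_pos_of_pos h _
      rw [abs_of_pos h1, ← Real.rpow_mul h.le, ← Real.rpow_add h]
      congr 1
      ring
  have hFa : ∀ t ∈ Set.Ico (0:ℝ) T₀, F a t = (1 - u a t) ^ (-(q * (r - 1))) := by
    intro t ht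
    rw [hF, hbca t ht]
    rcases eq_or_lt_of_le (sub_nonneg.mpr (hrange a haIcca t ht).2) with h | h
    · rw [← h, Real.zero_rpow (neg_ne_zero.mpr hq.ne'), Real.zero_rpow (neg_ne_zero.mpr hβ.ne')]
      simp
    · have h1 : (0:ℝ) < (1 - u a t) ^ (-q) := Real.rpow_pos_of_pos h _
      rw [abs_of_pos h1, ← Real.rpow_mul h.le, ← Real.rpow_add h]
      congr 1
      ring
  -- u 0 0 > 0
  have hA0 : 0 < u 0 0 := by
    rcases eq_or_lt_of_le (hrange 0 haIcc0 0 h0J).1 with h | h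
    · exfalso
      rw [hωdef, ← h, Real.zero_rpow (neg_ne_zero.mpr hα.ne')] at hω
      have h2 : (0:ℝ) ≤ (1 - u a 0) ^ (-(q * (r - 1))) :=
        Real.rpow_nonneg (sub_nonneg.mpr (hrange a haIcca 0 h0J).2) _
      linarith
    · exact h
  -- u 0 t > 0 on J
  have hApos : ∀ t ∈ Set.Ico (0:ℝ) T₀, 0 < u 0 t := by
    intro t ht
    rcases eq_or_lt_of_le (hrange 0 haIcc0 t ht).1 with h | h
    swap
    · exact h
    exfalso
    have hF0t : F 0 t = 0 := by
      rw [hF0 t ht, ← h, Real.zero_rpow (neg_ne_zero.mpr hα.ne')]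
    have hFat_le : F a t ≤ 0 := hF0t ▸ hFanti t ht haIcc0 haIcca ha.le
    have hBnn : (0:ℝ) ≤ 1 - u a t := sub_nonneg.mpr (hrange a haIcca t ht).2
    have hFat_eq : F a t = (1 - u a t) ^ (-(q * (r - 1))) := hFa t ht
    have hFat0 : F a t = 0 :=
      le_antisymm hFat_le (hFat_eq ▸ Real.rpow_nonneg hBnn _)
    have hBat : u a t = 1 := by
      by_contra hne
      have hBpos : 0 < 1 - u a t := lt_of_le_of_ne hBnn (fun hh => hne (by linarith))
      have h3 := Real.rpow_pos_of_pos hBpos (-(q * (r - 1)))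
      rw [← hFat_eq] at h3
      linarith
    have hux0 : ∀ x ∈ Set.Icc (0:ℝ) a, ux x t = 0 := by
      intro x hx
      have h1 : F x t ≤ 0 := hF0t ▸ hFanti t ht haIcc0 hx hx.1
      have h2 : 0 ≤ F x t := by
        simpa [hFat0] using hFanti t ht hx haIcca hx.2
      have hFx0 : F x t = 0 := le_antisymm h1 h2
      by_contra hne
      have habs : 0 < |ux x t| ^ (r - 2) := Real.rpow_pos_of_pos (abs_pos.mpr hne) _
      rw [hF x t] at hFx0
      exact (mul_ne_zero habs.ne' hne) hFx0
    have hconst : u 0 t = u a t := by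
      have hd : ∀ x ∈ Set.Ioo (0:ℝ) a, HasDerivAt (fun y => u y t) (ux x t) x := fun x hx =>
        (hux t ht x (Set.Ioo_subset_Icc_self hx)).hasDerivAt (Icc_mem_nhds hx.1 hx.2)
      have hdiff : DifferentiableOn ℝ (fun y => u y t) (interior (Set.Icc 0 a)) := by
        rw [interior_Icc]
        exact fun x hx => (hd x hx).differentiableAt.differentiableWithinAt
      have hz : ∀ x ∈ interior (Set.Icc (0:ℝ) a), deriv (fun y => u y t) x = 0 := by
        intro x hx
        rw [interior_Icc] at hx
        rw [(hd x hx).deriv]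
        exact hux0 x (Set.Ioo_subset_Icc_self hx)
      have h1 := antitoneOn_of_deriv_nonpos (convex_Icc 0 a) (hucx t ht) hdiff
        (fun x hx => le_of_eq (hz x hx)) haIcc0 haIcca ha.le
      have h2 := monotoneOn_of_deriv_nonneg (convex_Icc 0 a) (hucx t ht) hdiff
        (fun x hx => ge_of_eq (hz x hx)) haIcc0 haIcca ha.le
      exact le_antisymm h2 h1
    rw [hBat, ← h] at hconst
    exact absurd hconst (by norm_num)
  -- if u a 0 = 1 then u a s = 1 throughout
  have hC2 : u a 0 = 1 → ∀ s ∈ Set.Ico (0:ℝ) T₀, u a s = 1 := by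
    intro h1 s hs
    by_contra hne
    have hs2lt : u a s < 1 := lt_of_le_of_ne (hrange a haIcca s hs).2 hne
    set S := {σ : ℝ | σ ∈ Set.Icc (0:ℝ) s ∧ u a σ = 1} with hSdef
    have hIccJ : Set.Icc (0:ℝ) s ⊆ Set.Ico (0:ℝ) T₀ :=
      fun σ hσ => ⟨hσ.1, lt_of_le_of_lt hσ.2 hs.2⟩
    have hSne : S.Nonempty := ⟨0, ⟨le_rfl, hs.1⟩, h1⟩
    have hSbdd : BddAbove S := ⟨s, fun σ hσ => hσ.1.2⟩
    have hSclosed : IsClosed S := by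
      have hcont : ContinuousOn (fun σ => u a σ) (Set.Icc 0 s) := (huct a haIcca).mono hIccJ
      have hSeq : S = Set.Icc (0:ℝ) s ∩ (fun σ => u a σ) ⁻¹' {1} := by
        ext σ
        simp [hSdef]
      rw [hSeq]
      exact hcont.preimage_isClosed_of_isClosed isClosed_Icc isClosed_singleton
    set τ := sSup S with hτdef
    have hτS : τ ∈ S := hSclosed.csSup_mem hSne hSbdd
    have hτJ : τ ∈ Set.Ico (0:ℝ) T₀ := hIccJ hτS.1
    have hτs : τ < s := lt_of_le_of_ne hτS.1.2 (fun hh => hne (hh ▸ hτS.2))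
    have hIooJ : Set.Ioo τ s ⊆ Set.Ico (0:ℝ) T₀ := fun σ hσ =>
      ⟨le_trans hτJ.1 hσ.1.le, lt_trans hσ.2 hs.2⟩
    have hkey : ∀ σ ∈ Set.Ioo τ s, (u 0 σ) ^ (p * (r-1)) ≤ (1 - u a σ) ^ (q * (r-1)) := by
      intro σ hσ
      have hσJ := hIooJ hσ
      have hBlt : u a σ < 1 := by
        rcases lt_or_eq_of_le (hrange a haIcca σ hσJ).2 with h' | h'
        · exact h'
        · exfalso
          have hmem : σ ∈ S := ⟨⟨le_trans hτJ.1 hσ.1.le, hσ.2.le⟩, h'⟩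
          exact absurd (le_csSup hSbdd hmem) (not_le.mpr hσ.1)
      have hBpos : 0 < 1 - u a σ := by linarith
      have hApos' := hApos σ hσJ
      have hFle : F a σ ≤ F 0 σ := hFanti σ hσJ haIcc0 haIcca ha.le
      rw [hF0 σ hσJ, hFa σ hσJ, Real.rpow_neg hBpos.le, Real.rpow_neg hApos'.le] at hFle
      have hAp : 0 < (u 0 σ) ^ (p * (r-1)) := Real.rpow_pos_of_pos hApos' _
      have hBp : 0 < (1 - u a σ) ^ (q * (r-1)) := Real.rpow_pos_of_pos hBpos _
      have h3 : (u 0 σ) ^ (p * (r-1)) * ((1 - u a σ) ^ (q * (r-1)))⁻¹ ≤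
          (u 0 σ) ^ (p * (r-1)) * ((u 0 σ) ^ (p * (r-1)))⁻¹ :=
        mul_le_mul_of_nonneg_left hFle hAp.le
      rw [mul_inv_cancel₀ hAp.ne'] at h3
      calc (u 0 σ) ^ (p * (r-1))
          = ((u 0 σ) ^ (p * (r-1)) * ((1 - u a σ) ^ (q * (r-1)))⁻¹) * (1 - u a σ) ^ (q * (r-1)) := by
            field_simp
        _ ≤ 1 * (1 - u a σ) ^ (q * (r-1)) := mul_le_mul_of_nonneg_right h3 hBp.le
        _ = (1 - u a σ) ^ (q * (r-1)) := one_mul _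
    haveI hneB : (𝓝[Set.Ioo τ s] τ).NeBot := by
      apply mem_closure_iff_nhdsWithin_neBot.mp
      rw [closure_Ioo hτs.ne]
      exact ⟨le_rfl, hτs.le⟩
    have tA : Filter.Tendsto (fun σ => u 0 σ) (𝓝[Set.Ioo τ s] τ) (𝓝 (u 0 τ)) :=
      ((hut 0 haIcc0 τ hτJ).continuousWithinAt).mono hIooJ
    have tB : Filter.Tendsto (fun σ => 1 - u a σ) (𝓝[Set.Ioo τ s] τ) (𝓝 (1 - u a τ)) :=
      tendsto_const_nhds.sub (((hut a haIcca τ hτJ).continuousWithinAt).mono hIooJ)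
    have hcA : Filter.Tendsto (fun σ => (u 0 σ) ^ (p * (r-1))) (𝓝[Set.Ioo τ s] τ)
        (𝓝 ((u 0 τ) ^ (p * (r-1)))) :=
      (Real.continuousAt_rpow_const _ _ (Or.inr hα.le)).tendsto.comp tA
    have hcB : Filter.Tendsto (fun σ => (1 - u a σ) ^ (q * (r-1))) (𝓝[Set.Ioo τ s] τ)
        (𝓝 ((1 - u a τ) ^ (q * (r-1)))) :=
      (Real.continuousAt_rpow_const _ _ (Or.inr hβ.le)).tendsto.comp tB
    have hlim : (u 0 τ) ^ (p * (r-1)) ≤ (1 - u a τ) ^ (q * (r-1)) := by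
      refine le_of_tendsto_of_tendsto hcA hcB ?_
      filter_upwards [self_mem_nhdsWithin] with σ hσ
      exact hkey σ hσ
    rw [hτS.2] at hlim
    simp only [sub_self] at hlim
    rw [Real.zero_rpow hβ.ne'] at hlim
    have := Real.rpow_pos_of_pos (hApos τ hτJ) (p * (r-1))
    linarith
  -- the two boundary monotonicity bounds
  have hBs : ∀ s ∈ Set.Ico (0:ℝ) T₀,
      (1 - u a s) ^ (-(q * (r - 1))) ≤ (1 - u a 0) ^ (-(q * (r - 1))) := by
    intro s hs
    rcases lt_or_eq_of_le (hrange a haIcca 0 h0J).2 with h' | h'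
    · have hBpos : 0 < 1 - u a 0 := by linarith
      have hle : 1 - u a 0 ≤ 1 - u a s := by
        have := hanti a haIcca 0 h0J s hs hs.1
        linarith
      exact Real.rpow_le_rpow_of_nonpos hBpos hle (neg_nonpos.mpr hβ.le)
    · rw [hC2 h' s hs, h']
  have hAs : ∀ s ∈ Set.Ico (0:ℝ) T₀,
      (u 0 0) ^ (-(p * (r - 1))) ≤ (u 0 s) ^ (-(p * (r - 1))) := by
    intro s hs
    exact Real.rpow_le_rpow_of_nonpos (hApos s hs)
      (hanti 0 haIcc0 0 h0J s hs hs.1) (neg_nonpos.mpr hα.le)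
  have hFab : ∀ s ∈ Set.Ico (0:ℝ) T₀, F a s - F 0 s ≤ -ω := by
    intro s hs
    rw [hF0 s hs, hFa s hs, hωdef]
    have h1 := hBs s hs
    have h2 := hAs s hs
    linarith
  -- FTC in space
  have hFTC : ∀ s ∈ Set.Ico (0:ℝ) T₀,
      IntegrableOn (fun x => -Fx x s) (Set.Ioc 0 a) volume ∧
      (∫ x in (0:ℝ)..a, Fx x s) = F a s - F 0 s := by
    intro s hs
    have hderiv : ∀ x ∈ Set.Ioo (0:ℝ) a, HasDerivAt (fun y => -F y s) (-Fx x s) x := fun x hx =>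
      ((hFx s hs x (Set.Ioo_subset_Icc_self hx)).hasDerivAt (Icc_mem_nhds hx.1 hx.2)).neg
    have hint : IntegrableOn (fun x => -Fx x s) (Set.Ioc 0 a) volume :=
      intervalIntegral.integrableOn_deriv_of_nonneg ((hFcx s hs).neg) hderiv
        (fun x hx => neg_nonneg.mpr (hFxle x (Set.Ioo_subset_Icc_self hx) s hs))
    refine ⟨hint, ?_⟩
    have hint2 : IntervalIntegrable (fun x => Fx x s) volume 0 a := by
      rw [intervalIntegrable_iff_integrableOn_Ioc_of_le ha.le]
      exact hint.neg.congr (Filter.Eventually.of_forall (fun x => by simp))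
    exact intervalIntegral.integral_eq_sub_of_hasDeriv_right_of_le ha.le (hFcx s hs)
      (fun x hx => ((hFx s hs x (Set.Ioo_subset_Icc_self hx)).hasDerivAt
        (Icc_mem_nhds hx.1 hx.2)).hasDerivWithinAt) hint2
  set M : ℝ → ℝ := fun t => ∫ x in (0:ℝ)..a, φ (u x t) with hMdef
  have hφcont : ∀ t ∈ Set.Ico (0:ℝ) T₀, ContinuousOn (fun x => φ (u x t)) (Set.Icc 0 a) :=
    fun t ht => hφc.comp (hucx t ht)
      (fun x hx => ⟨(hrange x hx t ht).1, (hrange x hx t ht).2⟩)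
  have hφnn : ∀ t ∈ Set.Ico (0:ℝ) T₀, ∀ x ∈ Set.Icc (0:ℝ) a, 0 ≤ φ (u x t) := by
    intro t ht x hx
    rw [← hφ0]
    exact hφmono.monotoneOn ⟨le_rfl, zero_le_one⟩
      ⟨(hrange x hx t ht).1, (hrange x hx t ht).2⟩ (hrange x hx t ht).1
  have hφbd : ∀ t ∈ Set.Ico (0:ℝ) T₀, ∀ x ∈ Set.Icc (0:ℝ) a, ‖φ (u x t)‖ ≤ φ 1 := by
    intro t ht x hx
    have h1 := hrange x hx t ht
    have h3 : φ (u x t) ≤ φ 1 := hφmono.monotoneOn ⟨h1.1, h1.2⟩ ⟨zero_le_one, le_rfl⟩ h1.2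
    rw [Real.norm_eq_abs, abs_of_nonneg (hφnn t ht x hx)]
    exact h3
  -- continuity of the mass function
  have hMcont : ∀ b ∈ Set.Ico (0:ℝ) T₀, ContinuousOn M (Set.Icc 0 b) := by
    intro b hb
    have hsubJ : Set.Icc (0:ℝ) b ⊆ Set.Ico 0 T₀ :=
      fun σ hσ => ⟨hσ.1, lt_of_le_of_lt hσ.2 hb.2⟩
    have heq : M = fun t => ∫ x in Set.Ioc (0:ℝ) a, φ (u x t) := by
      funext t
      exact intervalIntegral.integral_of_le ha.le
    rw [heq]
    intro t₀ ht₀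
    apply MeasureTheory.continuousWithinAt_of_dominated (bound := fun _ => φ 1)
    · filter_upwards [self_mem_nhdsWithin] with t ht
      exact ((hφcont t (hsubJ ht)).mono Set.Ioc_subset_Icc_self).aestronglyMeasurable
        measurableSet_Ioc
    · filter_upwards [self_mem_nhdsWithin] with t ht
      refine (MeasureTheory.ae_restrict_iff' measurableSet_Ioc).mpr
        (Filter.Eventually.of_forall ?_)
      intro x hx
      exact hφbd t (hsubJ ht) x (Set.Ioc_subset_Icc_self hx)
    · exact integrableOn_const measure_Ioc_lt_top.ne
    · refine (MeasureTheory.ae_restrict_iff' measurableSet_Ioc).mpr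
        (Filter.Eventually.of_forall ?_)
      intro x hx
      exact ((hpde x (Set.Ioc_subset_Icc_self hx) t₀ (hsubJ ht₀)).continuousWithinAt).mono hsubJ
  -- the key slope estimate for M
  have hslope : ∀ b ∈ Set.Ico (0:ℝ) T₀, ∀ t ∈ Set.Ico (0:ℝ) b, ∀ r', -ω < r' →
      ∃ᶠ z in 𝓝[>] t, slope M t z < r' := by
    intro b hb t htb r' hr'
    by_contra hcon
    rw [Filter.not_frequently] at hcon
    have htJ : t ∈ Set.Ico (0:ℝ) T₀ := ⟨htb.1, lt_trans htb.2 hb.2⟩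
    rcases mem_nhdsGT_iff_exists_Ioo_subset.mp hcon with ⟨c, hc, hsub⟩
    have hc' : t < c := hc
    set d := min c T₀ with hddef
    have htd : t < d := lt_min hc' htJ.2
    set z : ℕ → ℝ := fun n => t + (d - t) * ((n : ℝ) + 2)⁻¹ with hzdef
    have hinvpos : ∀ n : ℕ, (0:ℝ) < ((n:ℝ) + 2)⁻¹ := by
      intro n
      have : (0:ℝ) < (n:ℝ) + 2 := by positivity
      positivity
    have hinvle : ∀ n : ℕ, ((n:ℝ) + 2)⁻¹ ≤ 2⁻¹ := by
      intro n
      have h2 : (2:ℝ) ≤ (n:ℝ) + 2 := by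
        have := Nat.cast_nonneg (α := ℝ) n
        linarith
      have := one_div_le_one_div_of_le (by norm_num : (0:ℝ) < 2) h2
      simpa [one_div] using this
    have hzt : ∀ n, t < z n := by
      intro n
      have h1 := hinvpos n
      have h2 : 0 < (d - t) * ((n:ℝ) + 2)⁻¹ := mul_pos (by linarith) h1
      simp only [hzdef]
      linarith
    have hzd : ∀ n, z n < d := by
      intro n
      have h1 := hinvpos n
      have h2 := hinvle n
      have h3 : (d - t) * ((n:ℝ) + 2)⁻¹ ≤ (d - t) * 2⁻¹ :=
        mul_le_mul_of_nonneg_left h2 (by linarith)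
      simp only [hzdef]
      nlinarith
    have hznJ : ∀ n, z n ∈ Set.Ico (0:ℝ) T₀ := fun n =>
      ⟨le_trans htJ.1 (hzt n).le, lt_of_lt_of_le (hzd n) (min_le_right c T₀)⟩
    have hznIoo : ∀ n, z n ∈ Set.Ioo t c := fun n =>
      ⟨hzt n, lt_of_lt_of_le (hzd n) (min_le_left c T₀)⟩
    have hslopeineq : ∀ n, r' ≤ slope M t (z n) := fun n => not_lt.mp (hsub (hznIoo n))
    have hztend : Filter.Tendsto z Filter.atTop (𝓝 t) := by
      have h1 : Filter.Tendsto (fun n : ℕ => ((n:ℝ) + 2)⁻¹) Filter.atTop (𝓝 0) := by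
        apply Filter.Tendsto.inv_tendsto_atTop
        exact Filter.tendsto_atTop_add_const_right _ 2 tendsto_natCast_atTop_atTop
      have h2 := (tendsto_const_nhds (x := d - t) (f := Filter.atTop (α := ℕ))).mul h1
      rw [mul_zero] at h2
      have h3 := (tendsto_const_nhds (x := t) (f := Filter.atTop (α := ℕ))).add h2
      rw [add_zero] at h3
      exact h3
    set G : ℕ → ℝ → ℝ := fun n x => (φ (u x t) - φ (u x (z n))) / (z n - t) with hGdef
    have hGtend : ∀ x ∈ Set.Icc (0:ℝ) a,
        Filter.Tendsto (fun n => G n x) Filter.atTop (𝓝 (-Fx x t)) := by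
      intro x hx
      have hsl := hasDerivWithinAt_iff_tendsto_slope.mp (hpde x hx t htJ)
      have hzin : Filter.Tendsto z Filter.atTop (𝓝[Set.Ico (0:ℝ) T₀ \ {t}] t) := by
        rw [tendsto_nhdsWithin_iff]
        refine ⟨hztend, Filter.Eventually.of_forall (fun n => ⟨hznJ n, ?_⟩)⟩
        simp [(hzt n).ne']
      have h2 := (hsl.comp hzin).neg
      refine h2.congr ?_
      intro n
      simp only [Function.comp_apply, hGdef]
      rw [slope_def_field]
      rw [← neg_div, neg_sub]
    have hGcont : ∀ n, ContinuousOn (G n) (Set.Icc 0 a) := by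
      intro n
      exact ((hφcont t htJ).sub (hφcont (z n) (hznJ n))).div_const _
    have hGnonneg : ∀ n, ∀ x ∈ Set.Icc (0:ℝ) a, 0 ≤ G n x := by
      intro n x hx
      apply div_nonneg _ (sub_pos.mpr (hzt n)).le
      have := hφanti x hx t htJ (z n) (hznJ n) (hzt n).le
      linarith
    have hGint : ∀ n, (∫ x in Set.Ioc (0:ℝ) a, G n x) ≤ -r' := by
      intro n
      have i1 : IntervalIntegrable (fun x => φ (u x t)) volume 0 a := by
        apply ContinuousOn.intervalIntegrable
        rw [Set.uIcc_of_le ha.le]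
        exact hφcont t htJ
      have i2 : IntervalIntegrable (fun x => φ (u x (z n))) volume 0 a := by
        apply ContinuousOn.intervalIntegrable
        rw [Set.uIcc_of_le ha.le]
        exact hφcont (z n) (hznJ n)
      have h3 : (∫ x in (0:ℝ)..a, G n x) = (M t - M (z n)) / (z n - t) := by
        simp only [hGdef, hMdef]
        rw [intervalIntegral.integral_div, intervalIntegral.integral_sub i1 i2]
      have h4 : (∫ x in (0:ℝ)..a, G n x) ≤ -r' := by
        rw [h3]
        have h1 := hslopeineq n
        rw [slope_def_field] at h1
        have h2 : 0 < z n - t := sub_pos.mpr (hzt n)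
        rw [le_div_iff₀ h2] at h1
        rw [div_le_iff₀ h2]
        linarith
      rw [intervalIntegral.integral_of_le ha.le] at h4
      exact h4
    -- Fatou
    have hmeasG : ∀ n, AEMeasurable (fun x => ENNReal.ofReal (G n x))
        (volume.restrict (Set.Ioc (0:ℝ) a)) :=
      fun n => ENNReal.measurable_ofReal.comp_aemeasurable
        (((hGcont n).mono Set.Ioc_subset_Icc_self).aemeasurable measurableSet_Ioc)
    have hfatou := MeasureTheory.lintegral_liminf_le' (u := Filter.atTop) hmeasG
    have hL1 : (∫⁻ x in Set.Ioc (0:ℝ) a, ENNReal.ofReal (-Fx x t)) ≤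
        Filter.liminf (fun n => ∫⁻ x in Set.Ioc (0:ℝ) a, ENNReal.ofReal (G n x))
          Filter.atTop := by
      refine le_trans (le_of_eq ?_) hfatou
      apply MeasureTheory.lintegral_congr_ae
      refine (MeasureTheory.ae_restrict_iff' measurableSet_Ioc).mpr
        (Filter.Eventually.of_forall ?_)
      intro x hx
      exact ((ENNReal.tendsto_ofReal (hGtend x (Set.Ioc_subset_Icc_self hx))).liminf_eq).symm
    have hRHS : Filter.liminf (fun n => ∫⁻ x in Set.Ioc (0:ℝ) a, ENNReal.ofReal (G n x))
        Filter.atTop ≤ ENNReal.ofReal (-r') := by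
      apply Filter.liminf_le_of_frequently_le'
      apply Filter.Frequently.of_forall
      intro n
      have hIntG : IntegrableOn (G n) (Set.Ioc (0:ℝ) a) volume :=
        ((hGcont n).integrableOn_Icc).mono_set Set.Ioc_subset_Icc_self
      rw [← MeasureTheory.ofReal_integral_eq_lintegral_ofReal hIntG
        ((MeasureTheory.ae_restrict_iff' measurableSet_Ioc).mpr (Filter.Eventually.of_forall
          (fun x hx => hGnonneg n x (Set.Ioc_subset_Icc_self hx))))]
      exact ENNReal.ofReal_le_ofReal (hGint n)
    have hIntnegFx : IntegrableOn (fun x => -Fx x t) (Set.Ioc (0:ℝ) a) volume := (hFTC t htJ).1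
    have hLHSval : (∫⁻ x in Set.Ioc (0:ℝ) a, ENNReal.ofReal (-Fx x t)) =
        ENNReal.ofReal (F 0 t - F a t) := by
      rw [← MeasureTheory.ofReal_integral_eq_lintegral_ofReal hIntnegFx
        ((MeasureTheory.ae_restrict_iff' measurableSet_Ioc).mpr (Filter.Eventually.of_forall
          (fun x hx => neg_nonneg.mpr (hFxle x (Set.Ioc_subset_Icc_self hx) t htJ))))]
      congr 1
      rw [MeasureTheory.integral_neg, ← intervalIntegral.integral_of_le ha.le, (hFTC t htJ).2]
      ring
    have hfinal : ENNReal.ofReal ω ≤ ENNReal.ofReal (-r') := by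
      refine le_trans ?_ (le_trans hL1 hRHS)
      rw [hLHSval]
      apply ENNReal.ofReal_le_ofReal
      have := hFab t htJ
      linarith
    rcases ENNReal.ofReal_le_ofReal_iff'.mp hfinal with h | h
    · linarith
    · linarith
  -- mass bound
  have hMbound : ∀ b ∈ Set.Ico (0:ℝ) T₀, M b ≤ M 0 - ω * b := by
    intro b hb
    rcases eq_or_lt_of_le hb.1 with h0 | h0
    · rw [← h0]
      simp
    have hkey : ∀ ε, 0 < ε → M b ≤ M 0 - (ω - ε) * b := by
      intro ε hε
      have hB : ∀ s : ℝ, HasDerivAt (fun σ => M 0 - (ω - ε) * σ) (-(ω - ε)) s := by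
        intro s
        have h1 : HasDerivAt (fun σ : ℝ => (ω - ε) * σ) (ω - ε) s := by
          simpa using (hasDerivAt_id s).const_mul (ω - ε)
        simpa using h1.const_sub (M 0)
      have hres := image_le_of_liminf_slope_right_lt_deriv_boundary (f := M)
        (f' := fun _ => -ω) (B := fun σ => M 0 - (ω - ε) * σ) (B' := fun _ => -(ω - ε))
        (hMcont b hb) (fun x hx r' hr' => hslope b hb x hx r' hr') (by simp) hB
        (fun x hx _ => by show -ω < -(ω - ε); linarith)
      have := hres (Set.right_mem_Icc.mpr hb.1)
      linarith
    by_contra hcon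
    push_neg at hcon
    have hεpos : 0 < (M b - (M 0 - ω * b)) / (2 * b) := by
      apply div_pos (by linarith) (by linarith)
    have h5 := hkey _ hεpos
    have h6 : (M b - (M 0 - ω * b)) / (2 * b) * b = (M b - (M 0 - ω * b)) / 2 := by
      field_simp
    nlinarith [h5, h6]
  have hMnonneg : ∀ t ∈ Set.Ico (0:ℝ) T₀, 0 ≤ M t := by
    intro t ht
    simp only [hMdef]
    apply intervalIntegral.integral_nonneg ha.le
    intro x hx
    exact hφnn t ht x hx
  constructor
  · intro t ht
    have h1 := hMbound t ht
    simpa only [hMdef] using h1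
  · have hle : ∀ t ∈ Set.Ico (0:ℝ) T₀, t ≤ M 0 / ω := by
      intro t ht
      rw [le_div_iff₀ hω]
      have h1 := hMbound t ht
      have h2 := hMnonneg t ht
      nlinarith
    have hgoal : T₀ ≤ M 0 / ω := by
      by_contra hcon
      push_neg at hcon
      have h0 : 0 ≤ M 0 / ω := div_nonneg (hMnonneg 0 h0J) hω.le
      have h7 := hle ((M 0 / ω + T₀) / 2) ⟨by linarith, by linarith⟩
      linarith
    simpa only [hMdef] using hgoal
end
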